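/- Let H = [[A, B], [-B, -A]] be a BSE matrix of form I (A = Aᴴ, B = Bᴴ, A, B ∈ ℂ^{n×n}) such that Σ·H = [[A, B], [B, A]] is positive definite. Then every eigenvalue λ of H is real, and if v = (v⁽¹⁾, v⁽²⁾) ∈ ℂ^{2n} satisfies H·v = λ·v, then the flipped vector y = (v⁽²⁾, v⁽¹⁾), i.e. y = F·v with F = [[0, Iₙ], [Iₙ, 0]], satisfies H·y = (-λ)·y. -/

import Mathlib

set_option maxHeartbeats 1000000


open Matrix ComplexOrder

/-- For a BSE matrix of form I with positive definite BSE Hamiltonian, all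
eigenvalues are real, and flipping the two block components of an eigenvector
for `λ` gives an eigenvector for `-λ`. -/
theorem bse_form_one_real_eigenvalues_and_flip
    (n : ℕ) (A B : Matrix (Fin n) (Fin n) ℂ)
    (hA : A = Aᴴ) (hB : B = Bᴴ)
    (H F : Matrix (Fin n ⊕ Fin n) (Fin n ⊕ Fin n) ℂ)
    (hH : H = fromBlocks A B (-B) (-A))
    (hF : F = fromBlocks 0 1 1 0)
    (hpd : (fromBlocks A B B A).PosDef) :
    (∀ (lam : ℂ) (v : Fin n ⊕ Fin n → ℂ), v ≠ 0 → H *ᵥ v = lam • v → lam.im = 0) ∧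
    (∀ (lam : ℂ) (v : Fin n ⊕ Fin n → ℂ), H *ᵥ v = lam • v →
      H *ᵥ (F *ᵥ v) = (-lam) • (F *ᵥ v)) := by
  set M : Matrix (Fin n ⊕ Fin n) (Fin n ⊕ Fin n) ℂ := fromBlocks A B B A with hM
  set S : Matrix (Fin n ⊕ Fin n) (Fin n ⊕ Fin n) ℂ := fromBlocks 1 0 0 (-1) with hS
  have hSM : S * M = H := by
    rw [hS, hM, hH, fromBlocks_multiply]
    simp
  have hSS : S * S = 1 := by
    rw [hS, fromBlocks_multiply]
    simp [← fromBlocks_one]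
  have hSher : Sᴴ = S := by
    rw [hS, fromBlocks_conjTranspose]
    simp
  constructor
  · intro lam v hv heig
    have hSH : S * H = M := by rw [← hSM, ← Matrix.mul_assoc, hSS, Matrix.one_mul]
    have hkey : M *ᵥ v = lam • (S *ᵥ v) := by
      calc M *ᵥ v = S *ᵥ (H *ᵥ v) := by rw [mulVec_mulVec, hSH]
        _ = S *ᵥ (lam • v) := by rw [heig]
        _ = lam • (S *ᵥ v) := by rw [mulVec_smul]
    set s : ℂ := star v ⬝ᵥ (S *ᵥ v) with hs
    set p : ℂ := star v ⬝ᵥ (M *ᵥ v) with hp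
    have hps : p = lam * s := by
      rw [hp, hkey, dotProduct_smul, hs, smul_eq_mul]
    have hppos : 0 < p := hpd.dotProduct_mulVec_pos hv
    have hpre : 0 < p.re ∧ p.im = 0 := by
      rw [Complex.lt_def] at hppos
      simp only [Complex.zero_re, Complex.zero_im] at hppos
      exact ⟨hppos.1, hppos.2.symm⟩
    have hstar : ∀ (a b : Fin n ⊕ Fin n → ℂ), star (a ⬝ᵥ b) = star a ⬝ᵥ star b := by
      intro a b
      simp [dotProduct, mul_comm]
    have hsim : s.im = 0 := by
      have hss : star s = s := by
        rw [hs, hstar, star_star, star_mulVec, hSher, dotProduct_comm,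
          ← dotProduct_mulVec]
      have := congrArg Complex.im hss
      simp only [Complex.star_def, Complex.conj_im] at this
      linarith
    have hsne : s ≠ 0 := by
      intro h0
      rw [h0, mul_zero] at hps
      exact absurd hps (by exact_mod_cast ne_of_gt hppos)
    have hsre : s.re ≠ 0 := by
      intro h0
      exact hsne (Complex.ext h0 hsim)
    have : p.im = lam.im * s.re + lam.re * s.im := by
      rw [hps, Complex.mul_im]; ring
    rw [hpre.2, hsim, mul_zero, add_zero] at this
    exact (mul_eq_zero.mp this.symm).resolve_right hsre
  · intro lam v heig
    have hHF : H * F = -(F * H) := by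
      rw [hH, hF, fromBlocks_multiply, fromBlocks_multiply, fromBlocks_neg]
      simp
    calc H *ᵥ (F *ᵥ v) = (H * F) *ᵥ v := by rw [mulVec_mulVec]
      _ = -((F * H) *ᵥ v) := by rw [hHF, neg_mulVec]
      _ = -(F *ᵥ (lam • v)) := by rw [← mulVec_mulVec, heig]
      _ = (-lam) • (F *ᵥ v) := by rw [mulVec_smul, neg_smul]
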